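/- Let G be the barbell graph B_n consisting of two cliques each on (n−1)/2 vertices joined by a path of length 2 (for odd n ≥ 5). Then the conductance of B_n satisfies φ(B_n) = Θ(1/n²); in particular, the cut separating one clique from the rest has exactly one crossing edge and volume Θ(n²), so φ(B_n) ≤ c/n² for some constant c, and every cut has conductance at least c'/n² for some constant c' > 0. -/

import Mathlib

open Finset

/-- Vertex type of the barbell graph: two cliques of `k` vertices and a middle vertex. -/
abbrev BV (k : ℕ) := Fin k ⊕ Fin k ⊕ Unit

/-- Underlying relation of the barbell graph `B_n` (with `k = (n-1)/2`): two
`k`-cliques, and a middle vertex joined to one designated vertex (`0`) in each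
clique, forming a path of length `2` between the cliques. -/
def barbellRel (k : ℕ) [NeZero k] : BV k → BV k → Prop
  | .inl _, .inl _ => True
  | .inr (.inl _), .inr (.inl _) => True
  | .inr (.inr _), .inl a => a = 0
  | .inr (.inr _), .inr (.inl a) => a = 0
  | _, _ => False

/-- The barbell graph. -/
def barbell (k : ℕ) [NeZero k] : SimpleGraph (BV k) :=
  SimpleGraph.fromRel (barbellRel k)

/-- The left clique as a vertex set. -/
def leftClique (k : ℕ) : Finset (BV k) :=
  Finset.univ.image (Sum.inl : Fin k → BV k)

/-- Number of edges crossing the cut `(S, Sᶜ)`. -/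
def cutEdges {V : Type*} [Fintype V] [DecidableEq V] (G : SimpleGraph V) [DecidableRel G.Adj]
    (S : Finset V) : ℕ :=
  (Finset.univ.filter (fun p : V × V => p.1 ∈ S ∧ p.2 ∉ S ∧ G.Adj p.1 p.2)).card

/-- Volume of a vertex set: sum of degrees. -/
def vol {V : Type*} [Fintype V] (G : SimpleGraph V) [DecidableRel G.Adj]
    (S : Finset V) : ℕ :=
  ∑ v ∈ S, G.degree v

/-- Conductance of a cut `(S, Sᶜ)`. -/
noncomputable def cutCond {V : Type*} [Fintype V] [DecidableEq V] (G : SimpleGraph V)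
    [DecidableRel G.Adj] (S : Finset V) : ℝ :=
  (cutEdges G S : ℝ) /
    min (vol G S : ℝ) (2 * (G.edgeFinset.card : ℝ) - (vol G S : ℝ))

/-- The conductance of the graph. -/
noncomputable def graphCond {V : Type*} [Fintype V] [DecidableEq V] (G : SimpleGraph V)
    [DecidableRel G.Adj] : ℝ :=
  sInf {x : ℝ | ∃ S : Finset V, S.Nonempty ∧ S ≠ Finset.univ ∧ x = cutCond G S}

section Aux

set_option linter.unusedSectionVars false

variable {k : ℕ} [NeZero k] [DecidableRel (barbell k).Adj]

lemma adj_ll {a b : Fin k} : (barbell k).Adj (Sum.inl a) (Sum.inl b) ↔ a ≠ b := by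
  simp [barbell, SimpleGraph.fromRel_adj, barbellRel]

lemma adj_rr {a b : Fin k} :
    (barbell k).Adj (Sum.inr (Sum.inl a)) (Sum.inr (Sum.inl b)) ↔ a ≠ b := by
  simp [barbell, SimpleGraph.fromRel_adj, barbellRel]

lemma not_adj_lr {a b : Fin k} :
    ¬ (barbell k).Adj (Sum.inl a) (Sum.inr (Sum.inl b)) := by
  simp [barbell, SimpleGraph.fromRel_adj, barbellRel]

lemma adj_lm {a : Fin k} :
    (barbell k).Adj (Sum.inl a) (Sum.inr (Sum.inr ()) : BV k) ↔ a = 0 := by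
  simp [barbell, SimpleGraph.fromRel_adj, barbellRel]

lemma adj_rm {a : Fin k} :
    (barbell k).Adj (Sum.inr (Sum.inl a)) (Sum.inr (Sum.inr ()) : BV k) ↔ a = 0 := by
  simp [barbell, SimpleGraph.fromRel_adj, barbellRel]

lemma mem_leftClique {v : BV k} : v ∈ leftClique k ↔ ∃ a : Fin k, v = Sum.inl a := by
  simp [leftClique, eq_comm]

lemma nf_inl (a : Fin k) :
    (barbell k).neighborFinset (Sum.inl a) =
      ((univ.erase a).image (Sum.inl : Fin k → BV k)) ∪
        (if a = 0 then {(Sum.inr (Sum.inr ()) : BV k)} else ∅) := by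
  ext v
  rw [SimpleGraph.mem_neighborFinset]
  rcases v with b | b | ⟨⟩ <;> by_cases h : a = 0 <;>
    simp [h, barbell, SimpleGraph.fromRel_adj, barbellRel, ne_comm]

lemma nf_inr (a : Fin k) :
    (barbell k).neighborFinset (Sum.inr (Sum.inl a)) =
      ((univ.erase a).image (fun b => (Sum.inr (Sum.inl b) : BV k))) ∪
        (if a = 0 then {(Sum.inr (Sum.inr ()) : BV k)} else ∅) := by
  ext v
  rw [SimpleGraph.mem_neighborFinset]
  rcases v with b | b | ⟨⟩ <;> by_cases h : a = 0 <;>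
    simp [h, barbell, SimpleGraph.fromRel_adj, barbellRel, ne_comm]

lemma nf_mid :
    (barbell k).neighborFinset (Sum.inr (Sum.inr ()) : BV k) =
      {(Sum.inl 0 : BV k), Sum.inr (Sum.inl 0)} := by
  ext v
  rw [SimpleGraph.mem_neighborFinset]
  rcases v with b | b | ⟨⟩ <;>
    simp [barbell, SimpleGraph.fromRel_adj, barbellRel, eq_comm]

lemma degree_inl (a : Fin k) :
    (barbell k).degree (Sum.inl a) = (k - 1) + (if a = 0 then 1 else 0) := by
  rw [SimpleGraph.degree, nf_inl, Finset.card_union_of_disjoint, Finset.card_image_of_injective _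
    Sum.inl_injective, Finset.card_erase_of_mem (mem_univ a), card_univ, Fintype.card_fin]
  · by_cases h : a = 0 <;> simp [h]
  · by_cases h : a = 0 <;> simp [h, Finset.disjoint_left]

lemma degree_inr (a : Fin k) :
    (barbell k).degree (Sum.inr (Sum.inl a)) = (k - 1) + (if a = 0 then 1 else 0) := by
  have hinj : Function.Injective (fun b : Fin k => (Sum.inr (Sum.inl b) : BV k)) := by
    intro x y hxy; simpa using hxy
  rw [SimpleGraph.degree, nf_inr, Finset.card_union_of_disjoint, Finset.card_image_of_injective _
    hinj, Finset.card_erase_of_mem (mem_univ a), card_univ, Fintype.card_fin]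
  · by_cases h : a = 0 <;> simp [h]
  · by_cases h : a = 0 <;> simp [h, Finset.disjoint_left]

lemma degree_mid : (barbell k).degree (Sum.inr (Sum.inr ()) : BV k) = 2 := by
  rw [SimpleGraph.degree, nf_mid]
  simp

lemma degree_pos (v : BV k) : 1 ≤ (barbell k).degree v := by
  have hk : 1 ≤ k := Nat.one_le_iff_ne_zero.mpr (NeZero.ne k)
  have key : ∀ a : Fin k, 1 ≤ (k - 1) + (if a = 0 then 1 else 0) := by
    intro a
    rcases eq_or_ne a 0 with rfl | h
    · simp
    · have h2 : 2 ≤ k := by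
        by_contra hc
        have hk1 : k = 1 := by omega
        apply h
        apply Fin.ext
        have := a.isLt
        simp [Fin.val_zero]
        omega
      simp [h]
      omega
  rcases v with a | a | ⟨⟩
  · rw [degree_inl]; exact key a
  · rw [degree_inr]; exact key a
  · rw [degree_mid]; omega

lemma vol_left : vol (barbell k) (leftClique k) = k * (k - 1) + 1 := by
  unfold vol leftClique
  rw [Finset.sum_image (fun x _ y _ h => Sum.inl_injective h)]
  simp only [degree_inl]
  rw [Finset.sum_add_distrib, Finset.sum_const, card_univ, Fintype.card_fin, smul_eq_mul,
    Finset.sum_ite_eq' univ (0 : Fin k) (fun _ => 1)]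
  simp

lemma vol_univ : vol (barbell k) univ = 2 * (k * (k - 1) + 1) + 2 := by
  unfold vol
  rw [Fintype.sum_sum_type, Fintype.sum_sum_type]
  simp only [degree_inl, degree_inr, Finset.sum_add_distrib, Finset.sum_const, card_univ,
    Fintype.card_fin, smul_eq_mul, Finset.sum_ite_eq' univ (0 : Fin k) (fun _ => 1),
    Fintype.sum_unique, mem_univ, if_true]
  have hd : (barbell k).degree (Sum.inr (Sum.inr (default : Unit))) = 2 := degree_mid
  rw [hd]
  ring

lemma edgeCard : (barbell k).edgeFinset.card = k * (k - 1) + 2 := by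
  have h := SimpleGraph.sum_degrees_eq_twice_card_edges (barbell k)
  have h2 : vol (barbell k) univ = 2 * (barbell k).edgeFinset.card := h
  rw [vol_univ] at h2
  omega

lemma vol_le_twice (S : Finset (BV k)) :
    vol (barbell k) S ≤ 2 * (barbell k).edgeFinset.card := by
  rw [← SimpleGraph.sum_degrees_eq_twice_card_edges]
  exact Finset.sum_le_sum_of_subset (Finset.subset_univ S)

lemma vol_pos (S : Finset (BV k)) (h : S.Nonempty) : 1 ≤ vol (barbell k) S := by
  obtain ⟨v, hv⟩ := h
  have h1 := Finset.single_le_sum (f := fun v => (barbell k).degree v)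
    (fun _ _ => Nat.zero_le _) hv
  have h2 := degree_pos (k := k) v
  unfold vol
  exact le_trans h2 h1

lemma vol_lt (S : Finset (BV k)) (h : S ≠ univ) :
    vol (barbell k) S + 1 ≤ 2 * (barbell k).edgeFinset.card := by
  obtain ⟨w, hw⟩ : ∃ w, w ∉ S := by
    by_contra hc
    push_neg at hc
    exact h (Finset.eq_univ_of_forall hc)
  have h1 : vol (barbell k) (insert w S) = (barbell k).degree w + vol (barbell k) S := by
    unfold vol
    rw [Finset.sum_insert hw]
  have h2 := vol_le_twice (k := k) (insert w S)
  have h3 := degree_pos (k := k) w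
  omega

lemma cutEdges_left : cutEdges (barbell k) (leftClique k) = 1 := by
  have hfilt : (Finset.univ.filter (fun p : BV k × BV k =>
      p.1 ∈ leftClique k ∧ p.2 ∉ leftClique k ∧ (barbell k).Adj p.1 p.2)) =
      {((Sum.inl 0 : BV k), (Sum.inr (Sum.inr ()) : BV k))} := by
    ext ⟨p, q⟩
    simp only [Finset.mem_filter, Finset.mem_univ, true_and, Finset.mem_singleton,
      Prod.mk.injEq]
    constructor
    · rintro ⟨hp, hq, hadj⟩
      obtain ⟨a, rfl⟩ := mem_leftClique.mp hp
      rcases q with b | b | ⟨⟩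
      · exact absurd (mem_leftClique.mpr ⟨b, rfl⟩) hq
      · exact absurd hadj not_adj_lr
      · have : a = 0 := adj_lm.mp hadj
        exact ⟨by rw [this], rfl⟩
    · rintro ⟨rfl, rfl⟩
      refine ⟨mem_leftClique.mpr ⟨0, rfl⟩, ?_, adj_lm.mpr rfl⟩
      intro hc
      obtain ⟨a, ha⟩ := mem_leftClique.mp hc
      exact absurd ha (by simp)
  rw [cutEdges, hfilt, Finset.card_singleton]

lemma cutEdges_pos (S : Finset (BV k)) (hne : S.Nonempty) (hS : S ≠ univ) :
    1 ≤ cutEdges (barbell k) S := by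
  by_contra hcon
  have h0 : cutEdges (barbell k) S = 0 := by omega
  rw [cutEdges, Finset.card_eq_zero] at h0
  have hcl : ∀ p q : BV k, p ∈ S → (barbell k).Adj p q → q ∈ S := by
    intro p q hp hadj
    by_contra hq
    have hmem : (p, q) ∈ Finset.univ.filter (fun p : BV k × BV k =>
        p.1 ∈ S ∧ p.2 ∉ S ∧ (barbell k).Adj p.1 p.2) := by
      simp [hp, hq, hadj]
    rw [h0] at hmem
    exact absurd hmem (Finset.notMem_empty _)
  have hmid : (Sum.inr (Sum.inr ()) : BV k) ∈ S := by
    obtain ⟨u, hu⟩ := hne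
    rcases u with a | a | ⟨⟩
    · have h0' : (Sum.inl 0 : BV k) ∈ S := by
        rcases eq_or_ne a 0 with rfl | h
        · exact hu
        · exact hcl _ _ hu (adj_ll.mpr h)
      exact hcl _ _ h0' (adj_lm.mpr rfl)
    · have h0' : (Sum.inr (Sum.inl 0) : BV k) ∈ S := by
        rcases eq_or_ne a 0 with rfl | h
        · exact hu
        · exact hcl _ _ hu (adj_rr.mpr h)
      exact hcl _ _ h0' (adj_rm.mpr rfl)
    · exact hu
  apply hS
  apply Finset.eq_univ_of_forall
  intro v
  have hl0 : (Sum.inl 0 : BV k) ∈ S := hcl _ _ hmid ((barbell k).adj_symm (adj_lm.mpr rfl))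
  have hr0 : (Sum.inr (Sum.inl 0) : BV k) ∈ S :=
    hcl _ _ hmid ((barbell k).adj_symm (adj_rm.mpr rfl))
  rcases v with b | b | ⟨⟩
  · rcases eq_or_ne b 0 with rfl | h
    · exact hl0
    · exact hcl _ _ hl0 (adj_ll.mpr (Ne.symm h))
  · rcases eq_or_ne b 0 with rfl | h
    · exact hr0
    · exact hcl _ _ hr0 (adj_rr.mpr (Ne.symm h))
  · exact hmid

end Aux

/-- The barbell graph `B_n` (odd `n ≥ 5`, two cliques of size `k = (n-1)/2`
joined by a path of length `2`) has conductance `Θ(1/n²)`: the cut separating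
one clique from the rest has exactly one crossing edge and volume
`k(k-1) + 1 = Θ(n²)`, so `φ(B_n) ≤ c/n²`, and every cut has conductance at
least `c'/n²`. -/
theorem barbell_conductance :
    ∃ c c' : ℝ, 0 < c ∧ 0 < c' ∧
      ∀ (n k : ℕ) [NeZero k], Odd n → 5 ≤ n → k = (n - 1) / 2 →
        @cutEdges (BV k) _ _ (barbell k) (Classical.decRel _) (leftClique k) = 1 ∧
        @vol (BV k) _ (barbell k) (Classical.decRel _) (leftClique k) = k * (k - 1) + 1 ∧
        @graphCond (BV k) _ _ (barbell k) (Classical.decRel _) ≤ c / (n : ℝ) ^ 2 ∧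
        ∀ S : Finset (BV k), S.Nonempty → S ≠ Finset.univ →
          c' / (n : ℝ) ^ 2 ≤ @cutCond (BV k) _ _ (barbell k) (Classical.decRel _) S := by
  refine ⟨9, 1, by norm_num, by norm_num, ?_⟩
  intro n k _ hodd hn5 hk
  letI : DecidableRel (barbell k).Adj := Classical.decRel _
  obtain ⟨j, hj⟩ := hodd
  have hnk : n = 2 * k + 1 := by omega
  have hk2 : 2 ≤ k := by omega
  have hkR : (2 : ℝ) ≤ (k : ℝ) := by exact_mod_cast hk2
  have hkcast : ((k - 1 : ℕ) : ℝ) = (k : ℝ) - 1 := by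
    have : 1 ≤ k := by omega
    push_cast [this]; ring
  have hnR : (n : ℝ) = 2 * (k : ℝ) + 1 := by
    rw [hnk]; push_cast; ring
  have hnpos : (0 : ℝ) < (n : ℝ) ^ 2 := by positivity
  -- useful numbers
  have hE : ((barbell k).edgeFinset.card : ℝ) = (k : ℝ) * ((k : ℝ) - 1) + 2 := by
    rw [edgeCard]; push_cast [hkcast]; ring
  refine ⟨cutEdges_left, vol_left, ?_, ?_⟩
  · -- upper bound
    have hval : cutCond (barbell k) (leftClique k) = 1 / ((k : ℝ) * ((k : ℝ) - 1) + 1) := by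
      rw [cutCond, cutEdges_left, vol_left, hE]
      have hvcast : ((k * (k - 1) + 1 : ℕ) : ℝ) = (k : ℝ) * ((k : ℝ) - 1) + 1 := by
        push_cast [hkcast]; ring
      rw [hvcast, min_eq_left (by nlinarith)]
      norm_num
    have hmem : cutCond (barbell k) (leftClique k) ∈
        {x : ℝ | ∃ S : Finset (BV k), S.Nonempty ∧ S ≠ Finset.univ ∧
          x = cutCond (barbell k) S} := by
      refine ⟨leftClique k, ?_, ?_, rfl⟩
      · exact ⟨Sum.inl 0, mem_leftClique.mpr ⟨0, rfl⟩⟩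
      · intro hc
        have : (Sum.inr (Sum.inr ()) : BV k) ∈ leftClique k := hc ▸ mem_univ _
        obtain ⟨a, ha⟩ := mem_leftClique.mp this
        exact absurd ha (by simp)
    have hbdd : BddBelow {x : ℝ | ∃ S : Finset (BV k), S.Nonempty ∧ S ≠ Finset.univ ∧
        x = cutCond (barbell k) S} := by
      refine ⟨0, ?_⟩
      rintro x ⟨S, hS1, hS2, rfl⟩
      have h1 : (0 : ℝ) ≤ (vol (barbell k) S : ℝ) := by positivity
      have h2 : (0 : ℝ) ≤ 2 * ((barbell k).edgeFinset.card : ℝ) - (vol (barbell k) S : ℝ) := by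
        have := vol_le_twice (k := k) S
        have : (vol (barbell k) S : ℝ) ≤ 2 * ((barbell k).edgeFinset.card : ℝ) := by
          exact_mod_cast this
        linarith
      exact div_nonneg (by positivity) (le_min h1 h2)
    calc graphCond (barbell k) ≤ cutCond (barbell k) (leftClique k) := csInf_le hbdd hmem
    _ ≤ 9 / (n : ℝ) ^ 2 := by
        rw [hval, div_le_div_iff₀ (by nlinarith) hnpos, hnR]
        nlinarith
  · -- lower bound
    intro S hne hSu
    have he : (1 : ℝ) ≤ (cutEdges (barbell k) S : ℝ) := by
      exact_mod_cast cutEdges_pos S hne hSu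
    have hA : (1 : ℝ) ≤ (vol (barbell k) S : ℝ) := by
      exact_mod_cast vol_pos S hne
    have hB : (vol (barbell k) S : ℝ) + 1 ≤ 2 * ((barbell k).edgeFinset.card : ℝ) := by
      exact_mod_cast vol_lt S hSu
    have hminpos : (0 : ℝ) < min ((vol (barbell k) S : ℝ))
        (2 * ((barbell k).edgeFinset.card : ℝ) - (vol (barbell k) S : ℝ)) :=
      lt_min (by linarith) (by linarith)
    have hEn : ((barbell k).edgeFinset.card : ℝ) ≤ (n : ℝ) ^ 2 := by
      rw [hE, hnR]; nlinarith
    have hminle : min ((vol (barbell k) S : ℝ))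
        (2 * ((barbell k).edgeFinset.card : ℝ) - (vol (barbell k) S : ℝ)) ≤ (n : ℝ) ^ 2 := by
      rcases le_total ((vol (barbell k) S : ℝ))
          (2 * ((barbell k).edgeFinset.card : ℝ) - (vol (barbell k) S : ℝ)) with h | h
      · rw [min_eq_left h]; linarith
      · rw [min_eq_right h]; linarith
    rw [cutCond]
    exact div_le_div₀ (by linarith) he hminpos hminle
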